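/- Let m be a positive integer with gcd(m,q) = 1, let C = F_q[x]·c(x) be the 1-generator QC code of index l generated by c(x) = (c_1(x),...,c_l(x)) ∈ (F_q[x]/(x^m−1))^l, let ξ be a primitive m-th root of unity in an algebraic closure of F_q, and set S_j = {i ∈ Z_m : c_j(ξ^i) ≠ 0} for j ∈ {1,...,l}. If S_i ∩ S_j = ∅ for all 1 ≤ i < j ≤ l, then C is μ_{−1}-LCD. -/

import Mathlib

open scoped BigOperators
open Polynomial

/-- The Euclidean dual of a linear code inside `(F[x]/(x^m - 1))^l`, each factor being
identified with `F^m` (coordinates indexed by `ZMod m`) via coefficient vectors. -/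
def qcDual {F : Type*} [Field F] {l m : ℕ} [NeZero m]
    (C : Submodule F (Fin l → ZMod m → F)) : Submodule F (Fin l → ZMod m → F) where
  carrier := {b | ∀ c ∈ C, ∑ j, ∑ i, b j i * c j i = 0}
  zero_mem' := by intro c hc; simp
  add_mem' := by
    intro x y hx hy c hc
    simp only [Set.mem_setOf_eq, Pi.add_apply, add_mul, Finset.sum_add_distrib,
      hx c hc, hy c hc, add_zero]
  smul_mem' := by
    intro r x hx c hc
    simp only [Set.mem_setOf_eq, Pi.smul_apply, smul_eq_mul, mul_assoc,
      ← Finset.mul_sum, hx c hc, mul_zero]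

/-- The coordinate permutation `μ_a` of `(F[x]/(x^m - 1))^l`, sending each component
`c_j(x)` to `c_j(x^a) mod (x^m - 1)`; on coefficient vectors the coefficient of `x^i`
of the image of `c_j` is the coefficient of `x^(a⁻¹ i)` of `c_j`. -/
def muQC {F : Type*} [Field F] (l m : ℕ) (a : ℤ) :
    (Fin l → ZMod m → F) →ₗ[F] (Fin l → ZMod m → F) where
  toFun c := fun j i => c j (((a : ZMod m))⁻¹ * i)
  map_add' := fun _ _ => rfl
  map_smul' := fun _ _ => rfl

/-- The coefficient vector (indexed by `ZMod m`) of a polynomial of degree `< m`,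
identifying `F[x]/(x^m - 1)` with `F^m`. -/
def polyToVec {F : Type*} [Field F] (m : ℕ) [NeZero m] (p : Polynomial F) : ZMod m → F :=
  fun i => p.coeff i.val

/-- The 1-generator quasi-cyclic code of index `l` generated by
`c = (c_1(x), …, c_l(x)) ∈ (F[x]/(x^m - 1))^l`. -/
def oneGenQC {F : Type*} [Field F] (m l : ℕ) [NeZero m] (c : Fin l → Polynomial F) :
    Submodule F (Fin l → ZMod m → F) :=
  Submodule.span F
    {v | ∃ p : Polynomial F, v = fun j => polyToVec m ((p * c j) % (X ^ m - 1))}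

section Aux
variable {F : Type*} [Field F] {m : ℕ} [NeZero m]

lemma monic_f : (X ^ m - 1 : F[X]).Monic := by
  simpa using monic_X_pow_sub_C (1 : F) (NeZero.ne m)

lemma degree_f : (X ^ m - 1 : F[X]).degree = m := by
  simpa using degree_X_pow_sub_C (Nat.pos_of_ne_zero (NeZero.ne m)) (1 : F)

noncomputable def psi (F : Type*) [Field F] (m : ℕ) [NeZero m] (P : F[X]) : ZMod m → F :=
  fun i => (P %ₘ (X ^ m - 1)).coeff i.val

lemma psi_add (P Q : F[X]) : psi F m (P + Q) = psi F m P + psi F m Q := by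
  funext i; simp [psi, add_modByMonic]

lemma mod_congr {P Q : F[X]} (h : (X ^ m - 1 : F[X]) ∣ P - Q) :
    P %ₘ (X ^ m - 1) = Q %ₘ (X ^ m - 1) := by
  have h0 := (modByMonic_eq_zero_iff_dvd (monic_f)).2 h
  rw [sub_modByMonic, sub_eq_zero] at h0
  exact h0

lemma X_pow_mod (n : ℕ) : (X ^ n : F[X]) %ₘ (X ^ m - 1) = X ^ (n % m) := by
  have h1 : (X ^ m - 1 : F[X]) ∣ (X ^ m) ^ (n / m) - 1 := by
    simpa using sub_dvd_pow_sub_pow (X ^ m : F[X]) 1 (n / m)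
  have h2 : (X : F[X]) ^ n - X ^ (n % m) = X ^ (n % m) * ((X ^ m) ^ (n / m) - 1) := by
    rw [mul_sub, mul_one, ← pow_mul, ← pow_add, Nat.mod_add_div]
  have h3 : (X ^ n : F[X]) %ₘ (X ^ m - 1) = (X ^ (n % m) : F[X]) %ₘ (X ^ m - 1) :=
    mod_congr (h2 ▸ Dvd.dvd.mul_left h1 _)
  rw [h3, (modByMonic_eq_self_iff monic_f).2]
  rw [degree_f, degree_X_pow]
  exact_mod_cast Nat.mod_lt n (Nat.pos_of_ne_zero (NeZero.ne m))

lemma psi_monomial (n : ℕ) (a : F) :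
    psi F m (monomial n a) = fun i => if (n : ZMod m) = i then a else 0 := by
  funext i
  rw [psi, ← smul_X_eq_monomial, smul_modByMonic, X_pow_mod]
  have hval : ((n : ZMod m) = i) ↔ n % m = i.val := by
    constructor
    · rintro rfl; exact (ZMod.val_natCast m n).symm ▸ rfl
    · intro h; rw [← ZMod.natCast_rightInverse (n := m) i, ← h, ZMod.natCast_mod]
  rw [coeff_smul, coeff_X_pow]
  by_cases hc : (n : ZMod m) = i
  · rw [if_pos (hval.1 hc).symm, if_pos hc, smul_eq_mul, mul_one]
  · rw [if_neg (fun hh => hc (hval.2 hh.symm)), if_neg hc, smul_zero]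

lemma psi_sum {ι : Type*} (s : Finset ι) (g : ι → F[X]) (i : ZMod m) :
    psi F m (∑ j ∈ s, g j) i = ∑ j ∈ s, psi F m (g j) i := by
  classical
  induction s using Finset.induction_on with
  | empty => simp [psi]
  | insert hj ih => simp_all [psi_add, Pi.add_apply]

lemma pairing (A B : F[X]) :
    ∑ i : ZMod m, psi F m A i * psi F m B (-i) = psi F m (A * B) 0 := by
  induction A using Polynomial.induction_on' with
  | add p q hp hq =>
    simp only [psi_add, Pi.add_apply, add_mul, Finset.sum_add_distrib, hp, hq]
  | monomial n a =>
    induction B using Polynomial.induction_on' with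
    | add p q hp hq =>
      simp only [psi_add, Pi.add_apply, mul_add, Finset.sum_add_distrib, hp, hq]
    | monomial k b =>
      rw [monomial_mul_monomial, psi_monomial, psi_monomial, psi_monomial]
      rw [Finset.sum_eq_single ((n : ZMod m))]
      · simp only [if_pos rfl]
        by_cases hc : (k : ZMod m) = -(n : ZMod m)
        · rw [if_pos hc, if_pos (show ((n + k : ℕ) : ZMod m) = 0 by push_cast; linear_combination hc), if_true]
        · rw [if_neg hc, mul_zero,
            if_neg (fun hh => hc (by push_cast at hh; linear_combination hh))]
      · intro x _ hx; simp [Ne.symm hx]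
      · intro hx; exact absurd (Finset.mem_univ _) hx

lemma psi_collapse (A : F[X]) (k : ℕ) : psi F m (A * X ^ k) 0 = psi F m A (-(k : ZMod m)) := by
  rw [← pairing, Finset.sum_eq_single (-(k : ZMod m))]
  · rw [X_pow_eq_monomial, psi_monomial]
    simp
  · intro x _ hx
    rw [X_pow_eq_monomial, psi_monomial]
    have hne : ¬((k : ZMod m) = -x) := fun hh => hx (by rw [hh, neg_neg])
    simp [hne]
  · intro hx; exact absurd (Finset.mem_univ _) hx

lemma neg_one_inv_zmod : ((-1 : ZMod m))⁻¹ = -1 := by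
  have h : ((-1 : ZMod m)) * (-1) = 1 := by ring
  have hu : IsUnit (-1 : ZMod m) := isUnit_one.neg
  calc (-1 : ZMod m)⁻¹ = (-1)⁻¹ * ((-1) * (-1)) := by rw [h, mul_one]
    _ = ((-1)⁻¹ * (-1)) * (-1) := by ring
    _ = -1 := by rw [ZMod.inv_mul_of_unit _ hu, one_mul]
end Aux

section Gen
variable {F : Type*} [Field F] {l m : ℕ} [NeZero m]

noncomputable def psiL (F : Type*) [Field F] (m : ℕ) [NeZero m] : F[X] →ₗ[F] (ZMod m → F) :=
  LinearMap.pi fun i : ZMod m => (lcoeff F i.val).comp (modByMonicHom (X ^ m - 1))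

noncomputable def genMap (F : Type*) [Field F] (m l : ℕ) [NeZero m] (c : Fin l → F[X]) :
    F[X] →ₗ[F] (Fin l → ZMod m → F) :=
  LinearMap.pi fun j => (psiL F m).comp (LinearMap.mulRight F (c j))

lemma genMap_apply (c : Fin l → F[X]) (p : F[X]) (j : Fin l) (i : ZMod m) :
    genMap F m l c p j i = psi F m (p * c j) i := rfl

lemma genMap_eq_polyToVec (c : Fin l → F[X]) (p : F[X]) :
    genMap F m l c p = fun j => polyToVec m ((p * c j) % (X ^ m - 1)) := by
  funext j i
  rw [genMap_apply, polyToVec, psi, modByMonic_eq_mod _ monic_f]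

lemma oneGenQC_eq_range (c : Fin l → F[X]) :
    oneGenQC m l c = LinearMap.range (genMap F m l c) := by
  have hset : {v : Fin l → ZMod m → F |
      ∃ p : F[X], v = fun j => polyToVec m ((p * c j) % (X ^ m - 1))}
      = ↑(LinearMap.range (genMap F m l c)) := by
    ext v
    simp only [Set.mem_setOf_eq, SetLike.mem_coe, LinearMap.mem_range]
    constructor
    · rintro ⟨p, rfl⟩; exact ⟨p, genMap_eq_polyToVec c p⟩
    · rintro ⟨p, rfl⟩; exact ⟨p, genMap_eq_polyToVec c p⟩
  rw [oneGenQC, hset, Submodule.span_eq]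

end Gen

/-- Let `gcd(m,q) = 1`, `C = F_q[x]·c(x)` a 1-generator QC code of index `l`, `ξ` a
primitive `m`-th root of unity in an algebraic closure of `F_q`, and
`S_j = {i ∈ Z_m : c_j(ξ^i) ≠ 0}`.  If the `S_j` are pairwise disjoint, then `C` is
`μ_{-1}`-LCD. -/
theorem oneGen_qc_disjoint_supports_mu_neg_one_lcd
    {F : Type*} [Field F] [Fintype F] {l m : ℕ} [NeZero m]
    (hmq : Nat.Coprime m (Fintype.card F))
    {K : Type*} [Field K] [Algebra F K] [IsAlgClosed K] [Algebra.IsAlgebraic F K]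
    (ξ : K) (hξ : IsPrimitiveRoot ξ m)
    (c : Fin l → Polynomial F)
    (S : Fin l → Set ℕ)
    (hS : ∀ j, S j = {i : ℕ | i < m ∧ Polynomial.aeval (ξ ^ i) (c j) ≠ 0})
    (hdisj : ∀ j k : Fin l, j ≠ k → S j ∩ S k = ∅) :
    oneGenQC m l c ⊓ qcDual ((oneGenQC m l c).map (muQC l m (-1))) = ⊥ := by
  classical
  have hm : 0 < m := Nat.pos_of_ne_zero (NeZero.ne m)
  rw [eq_bot_iff]
  intro v hv
  rw [Submodule.mem_inf] at hv
  obtain ⟨hv1, hv2⟩ := hv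
  rw [oneGenQC_eq_range] at hv1
  obtain ⟨p, rfl⟩ := hv1
  have hmu : ∀ (w : Fin l → ZMod m → F) (j : Fin l) (i : ZMod m),
      muQC l m (-1) w j i = w j (-i) := by
    intro w j i
    show w j ((((-1 : ℤ) : ZMod m))⁻¹ * i) = w j (-i)
    congr 1
    push_cast
    rw [neg_one_inv_zmod]
    ring
  set g : F[X] := p * ∑ j, (c j) ^ 2 with hg
  have hkey : ∀ k : ℕ, psi F m (g * X ^ k) 0 = 0 := by
    intro k
    have hwC : genMap F m l c (X ^ k) ∈ oneGenQC m l c := by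
      rw [oneGenQC_eq_range]; exact ⟨X ^ k, rfl⟩
    have hw : muQC l m (-1) (genMap F m l c (X ^ k)) ∈
        (oneGenQC m l c).map (muQC l m (-1)) := Submodule.mem_map_of_mem hwC
    have h0 := hv2 _ hw
    have h1 : ∀ j : Fin l, ∑ i : ZMod m, genMap F m l c p j i *
        (muQC l m (-1) (genMap F m l c (X ^ k))) j i
        = psi F m ((p * c j) * (X ^ k * c j)) 0 := by
      intro j
      rw [← pairing]
      refine Finset.sum_congr rfl fun i _ => ?_
      rw [hmu, genMap_apply, genMap_apply]
    rw [Finset.sum_congr rfl (fun j _ => h1 j)] at h0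
    have h3 : ∑ j : Fin l, psi F m ((p * c j) * (X ^ k * c j)) 0 = psi F m (g * X ^ k) 0 := by
      rw [← psi_sum]
      congr 1
      have he : ∀ j : Fin l, (p * c j) * (X ^ k * c j) = p * (c j) ^ 2 * X ^ k :=
        fun j => by ring
      rw [Finset.sum_congr rfl (fun j _ => he j), ← Finset.sum_mul, ← Finset.mul_sum, hg]
    rw [← h3]; exact h0
  have hpsig : ∀ i : ZMod m, psi F m g i = 0 := by
    intro i
    have h := hkey (-i).val
    rw [psi_collapse] at h
    rwa [show ((((-i).val : ℕ)) : ZMod m) = -i from ZMod.natCast_rightInverse _, neg_neg] at h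
  have hdvd : (X ^ m - 1 : F[X]) ∣ g := by
    rw [← modByMonic_eq_zero_iff_dvd monic_f]
    ext n
    rw [coeff_zero]
    by_cases hn : n < m
    · have h := hpsig (n : ZMod m)
      rwa [psi, ZMod.val_natCast_of_lt hn] at h
    · refine coeff_eq_zero_of_degree_lt ?_
      have hdeg := degree_modByMonic_lt g (monic_f (m := m) (F := F))
      rw [degree_f] at hdeg
      exact hdeg.trans_le (by exact_mod_cast not_lt.1 hn)
  have haeval : ∀ i : ℕ, aeval (ξ ^ i) p * ∑ j, (aeval (ξ ^ i) (c j)) ^ 2 = 0 := by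
    intro i
    obtain ⟨t, ht⟩ := hdvd
    have h1 : ((ξ ^ i) ^ m - 1 : K) = 0 := by
      rw [← pow_mul, mul_comm, pow_mul, hξ.pow_eq_one, one_pow, sub_self]
    have h2 := congrArg (fun q : F[X] => aeval (ξ ^ i : K) q) ht
    simp only [hg, map_mul, map_sum, map_pow, map_sub, map_one, aeval_X] at h2
    rw [h2, h1, zero_mul]
  have hpc : ∀ (i : ℕ) (j : Fin l), aeval (ξ ^ i) p * aeval (ξ ^ i) (c j) = 0 := by
    intro i j
    have hxi : (ξ : K) ^ i = ξ ^ (i % m) := by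
      conv_lhs => rw [← Nat.mod_add_div i m]
      rw [pow_add, pow_mul, hξ.pow_eq_one, one_pow, mul_one]
    rw [hxi]
    by_cases hc0 : aeval (ξ ^ (i % m)) (c j) = 0
    · rw [hc0, mul_zero]
    · have hmem : i % m ∈ S j := by rw [hS]; exact ⟨Nat.mod_lt i hm, hc0⟩
      have hothers : ∀ k : Fin l, k ≠ j → aeval (ξ ^ (i % m)) (c k) = 0 := by
        intro k hk
        by_contra hne
        have hboth : i % m ∈ S j ∩ S k :=
          ⟨hmem, by rw [hS]; exact ⟨Nat.mod_lt i hm, hne⟩⟩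
        rw [hdisj j k (fun h => hk h.symm)] at hboth
        exact hboth
      have hsum : ∑ k : Fin l, (aeval (ξ ^ (i % m)) (c k)) ^ 2
          = (aeval (ξ ^ (i % m)) (c j)) ^ 2 := by
        rw [Finset.sum_eq_single j]
        · intro k _ hk; rw [hothers k hk, zero_pow two_ne_zero]
        · intro h; exact absurd (Finset.mem_univ _) h
      have h := haeval (i % m)
      rw [hsum] at h
      have hp0 : aeval (ξ ^ (i % m)) p = 0 := by
        rcases mul_eq_zero.1 h with h' | h'
        · exact h'
        · exact absurd h' (pow_ne_zero _ hc0)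
      rw [hp0, zero_mul]
  have hdvdj : ∀ j : Fin l, (X ^ m - 1 : F[X]) ∣ p * c j := by
    intro j
    have hmap : ((X ^ m - 1 : F[X]).map (algebraMap F K)) = (X ^ m - 1 : K[X]) := by
      simp
    rw [← Polynomial.map_dvd_map' (algebraMap F K), hmap, X_pow_sub_one_eq_prod hm hξ]
    apply Finset.prod_dvd_of_coprime
    · exact (Polynomial.pairwise_coprime_X_sub_C
        (Function.injective_id : Function.Injective (id : K → K))).set_pairwise _
    · intro ζ hζ
      obtain ⟨i, hi, rfl⟩ := hξ.eq_pow_of_pow_eq_one ((Polynomial.mem_nthRootsFinset hm 1).1 hζ)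
      rw [Polynomial.dvd_iff_isRoot]
      show Polynomial.eval (ξ ^ i) ((p * c j).map (algebraMap F K)) = 0
      rw [Polynomial.eval_map, ← Polynomial.aeval_def, map_mul]
      exact hpc i j
  have hfin : genMap F m l c p = 0 := by
    funext j i
    have h0 : (p * c j) %ₘ (X ^ m - 1 : F[X]) = 0 :=
      (modByMonic_eq_zero_iff_dvd monic_f).2 (hdvdj j)
    show psi F m (p * c j) i = 0
    rw [psi, h0, coeff_zero]
  rw [hfin]
  exact Submodule.zero_mem ⊥
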